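/- Under the change of variables x → hx, y → hy, z → hz, t → h⁻¹t with h = a ≠ 0, the Chen system ẋ = a(y-x), ẏ = (c-a)x + cy - xz, ż = -bz + xy is transformed into the generalized Lorenz system ẋ' = A(y'-x'), ẏ' = Cx' + Dy' - x'z', ż' = -Bz' + x'y' with A = 1, B = b/a, C = (c-a)/a, D = c/a. Precisely: if (x(t), y(t), z(t)) solves the Chen system, then (u(s), v(s), w(s)) := (x(s/a)/a, y(s/a)/a, z(s/a)/a) solves the rescaled system. -/

import Mathlib

/-- The rescaling (u,v,w)(s) = (x(s/a)/a, y(s/a)/a, z(s/a)/a), a ≠ 0,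
maps solutions of the Chen system ẋ = a(y-x), ẏ = (c-a)x + cy - xz,
ż = -bz + xy to solutions of the generalized Lorenz system with
A = 1, B = b/a, C = (c-a)/a, D = c/a. -/
theorem stmt3 (a b c : ℝ) (ha : a ≠ 0) (x y z : ℝ → ℝ)
    (hx : ∀ t, HasDerivAt x (a * (y t - x t)) t)
    (hy : ∀ t, HasDerivAt y ((c - a) * x t + c * y t - x t * z t) t)
    (hz : ∀ t, HasDerivAt z (-b * z t + x t * y t) t) :
    let u : ℝ → ℝ := fun s => x (s / a) / a
    let v : ℝ → ℝ := fun s => y (s / a) / a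
    let w : ℝ → ℝ := fun s => z (s / a) / a
    (∀ s, HasDerivAt u (1 * (v s - u s)) s) ∧
    (∀ s, HasDerivAt v ((c - a) / a * u s + c / a * v s - u s * w s) s) ∧
    (∀ s, HasDerivAt w (-(b / a) * w s + u s * v s) s) := by
  intro u v w
  refine ⟨fun s => ?_, fun s => ?_, fun s => ?_⟩
  · have h := ((hx (s / a)).comp s ((hasDerivAt_id s).div_const a)).div_const a
    convert h using 1
    show (1 : ℝ) * (y (s / a) / a - x (s / a) / a) = _
    field_simp
    all_goals rfl
  · have h := ((hy (s / a)).comp s ((hasDerivAt_id s).div_const a)).div_const a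
    convert h using 1
    show (c - a) / a * (x (s / a) / a) + c / a * (y (s / a) / a) -
        x (s / a) / a * (z (s / a) / a) = _
    field_simp
    all_goals rfl
  · have h := ((hz (s / a)).comp s ((hasDerivAt_id s).div_const a)).div_const a
    convert h using 1
    show -(b / a) * (z (s / a) / a) + x (s / a) / a * (y (s / a) / a) = _
    field_simp
    all_goals rfl
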